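/- Let 𝔽 = ℚ(q,𝔱) be the field of rational functions in two indeterminates q and 𝔱, and let u ∈ 𝔽[z_1,…,z_N] be a polynomial in N variables. If u(𝔱^{N−1}q^{λ_1}, 𝔱^{N−2}q^{λ_2}, …, 𝔱^{N−i}q^{λ_i}, …, q^{λ_N}) = 0 for every partition λ = (λ_1 ≥ λ_2 ≥ ⋯ ≥ λ_N ≥ 0) of nonnegative integers, then u = 0. -/
import Mathlib


/-!
STATEMENT 8: a polynomial over `𝔽 = ℚ(q,𝔱)` in `z₁,…,z_N` vanishing at all
principal specializations `z_i = 𝔱^{N-i} q^{λ_i}` (λ a partition) is zero.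
Variables of `𝔽`:  `X 0 = q`, `X 1 = 𝔱`.  The variable `z_i` (1 ≤ i ≤ N) is
`MvPolynomial.X i'` for `i' : Fin N` with `i = i'.val + 1`.
-/

noncomputable section
open Finset

abbrev Fqt := FractionRing (MvPolynomial (Fin 2) ℚ)

def qv : Fqt := algebraMap (MvPolynomial (Fin 2) ℚ) Fqt (MvPolynomial.X 0)
def tv : Fqt := algebraMap (MvPolynomial (Fin 2) ℚ) Fqt (MvPolynomial.X 1)

lemma qv_pow_inj : Function.Injective fun n : ℕ => qv ^ n := by
  intro a b hab
  have hinj := IsFractionRing.injective (MvPolynomial (Fin 2) ℚ) Fqt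
  have : (MvPolynomial.X 0 : MvPolynomial (Fin 2) ℚ) ^ a = MvPolynomial.X 0 ^ b := by
    apply hinj
    simpa [qv, map_pow] using hab
  have := congrArg MvPolynomial.totalDegree this
  simpa [MvPolynomial.totalDegree_X_pow] using this

set_option linter.unnecessarySimpa false in
lemma tv_ne_zero : tv ≠ 0 := by
  intro htv
  have hinj := IsFractionRing.injective (MvPolynomial (Fin 2) ℚ) Fqt
  have : (MvPolynomial.X 1 : MvPolynomial (Fin 2) ℚ) = 0 := by
    apply hinj; simpa [tv] using htv
  exact MvPolynomial.X_ne_zero 1 this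

theorem vanishing_at_all_partition_specializations_implies_zero
    (N : ℕ) (u : MvPolynomial (Fin N) Fqt)
    (h : ∀ lam : Fin N → ℕ, (∀ i j : Fin N, i ≤ j → lam j ≤ lam i) →
      MvPolynomial.eval (fun i : Fin N => tv ^ (N - 1 - (i : ℕ)) * qv ^ (lam i)) u = 0) :
    u = 0 := by
  induction N with
  | zero =>
    obtain ⟨c, rfl⟩ := MvPolynomial.C_surjective (Fin 0) u
    have := h (fun _ => 0) (fun i j _ => le_rfl)
    simpa using this
  | succ n IH =>
    set F := MvPolynomial.finSuccEquiv Fqt n with hF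
    suffices hFu : F u = 0 by
      have := F.injective (by rw [hFu]; simp : F u = F 0)
      exact this
    ext k m
    rw [Polynomial.coeff_zero, MvPolynomial.coeff_zero]
    suffices hck : (F u).coeff k = 0 by rw [hck, MvPolynomial.coeff_zero]
    apply IH
    intro lam' hlam'
    set pt' : Fin n → Fqt := fun i => tv ^ (n - 1 - (i : ℕ)) * qv ^ (lam' i) with hpt'
    set p : Polynomial Fqt := Polynomial.map (MvPolynomial.eval pt') (F u) with hp
    set B : ℕ := Finset.univ.sup lam' with hB
    have hBle : ∀ j : Fin n, lam' j ≤ B := fun j => Finset.le_sup (Finset.mem_univ j)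
    have hp0 : p = 0 := by
      apply Polynomial.eq_zero_of_infinite_isRoot
      apply Set.infinite_of_injective_forall_mem
        (f := fun m : ℕ => tv ^ n * qv ^ (B + m))
      · intro a b hab
        have h1 : qv ^ (B + a) = qv ^ (B + b) :=
          mul_left_cancel₀ (pow_ne_zero n tv_ne_zero) hab
        have := qv_pow_inj h1
        omega
      · intro m
        set lam : Fin (n + 1) → ℕ := Fin.cons (B + m) lam' with hlam
        have hanti : ∀ i j : Fin (n + 1), i ≤ j → lam j ≤ lam i := by
          intro i j hij
          induction i using Fin.cases with
          | zero =>
            induction j using Fin.cases with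
            | zero => exact le_rfl
            | succ j' =>
              simpa [hlam] using (hBle j').trans (Nat.le_add_right _ m)
          | succ i' =>
            induction j using Fin.cases with
            | zero => exact absurd (Fin.le_zero_iff.mp hij) (Fin.succ_ne_zero i')
            | succ j' =>
              have : i' ≤ j' := by
                simpa [Fin.succ_le_succ_iff] using hij
              simpa [hlam] using hlam' i' j' this
        have hu := h lam hanti
        have hpoint : (fun i : Fin (n + 1) => tv ^ (n + 1 - 1 - (i : ℕ)) * qv ^ (lam i))
            = Fin.cons (tv ^ n * qv ^ (B + m)) pt' := by
          funext i
          induction i using Fin.cases with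
          | zero => simp [hlam]
          | succ i' =>
            show tv ^ (n + 1 - 1 - ((i'.succ : Fin (n+1)) : ℕ)) * qv ^ (lam i'.succ) = _
            have he : n + 1 - 1 - ((i'.succ : Fin (n+1)) : ℕ) = n - 1 - (i' : ℕ) := by
              simp [Fin.val_succ]; omega
            rw [hlam, Fin.cons_succ, Fin.cons_succ, he]
        rw [hpoint, MvPolynomial.eval_eq_eval_mv_eval'] at hu
        exact hu
    have : MvPolynomial.eval pt' ((F u).coeff k) = p.coeff k := by
      rw [hp, Polynomial.coeff_map]
    rw [this, hp0, Polynomial.coeff_zero]
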